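/- Let N ≥ 3 be a natural number, let p : ZMod N → ZMod N be injective, and let S : ZMod N satisfy 2·S ≠ 0. If for every n : ZMod N the difference p(n+1) − p(n) lies in {S, −S}, then either p(n+1) − p(n) = S for all n, or p(n+1) − p(n) = −S for all n. (Perfection Test: a path all of whose edges have the same length must have all its steps equal, i.e. of the same sign.) -/
import Mathlib


/-- **Perfection Test.** For `N ≥ 3`, an injective path `p : ZMod N → ZMod N` all of
whose steps lie in `{S, -S}` (with `2·S ≠ 0`) has all steps equal to `S`, or all steps
equal to `-S`. -/
theorem perfection_test (N : ℕ) (hN : 3 ≤ N) (p : ZMod N → ZMod N)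
    (hp : Function.Injective p) (S : ZMod N) (hS : 2 * S ≠ 0)
    (h : ∀ n : ZMod N, p (n + 1) - p n = S ∨ p (n + 1) - p n = -S) :
    (∀ n : ZMod N, p (n + 1) - p n = S) ∨ (∀ n : ZMod N, p (n + 1) - p n = -S) := by
  haveI : NeZero N := ⟨by omega⟩
  by_contra hcon
  push_neg at hcon
  obtain ⟨⟨a, ha⟩, ⟨b, hb⟩⟩ := hcon
  have ha' : p (a + 1) - p a = -S := (h a).resolve_left ha
  have hb' : p (b + 1) - p b = S := (h b).resolve_right hb
  -- find minimal m : ℕ with step (b + m) ≠ S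
  have hex : ∃ m : ℕ, p (b + (m : ZMod N) + 1) - p (b + (m : ZMod N)) ≠ S := by
    refine ⟨(a - b).val, ?_⟩
    rw [ZMod.natCast_val, ZMod.cast_id]
    rw [show b + (a - b) = a by ring, ha']
    intro hSS
    exact hS (by linear_combination -hSS)
  classical
  set m := Nat.find hex with hm
  have hspec : p (b + (m : ZMod N) + 1) - p (b + (m : ZMod N)) ≠ S := Nat.find_spec hex
  have hm0 : m ≠ 0 := by
    intro h0
    rw [h0] at hspec
    simp at hspec
    exact hspec hb'
  have hprev : p (b + ((m - 1 : ℕ) : ZMod N) + 1) - p (b + ((m - 1 : ℕ) : ZMod N)) = S := by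
    by_contra hcontra
    exact Nat.find_min hex (show m - 1 < m by omega) hcontra
  set n := b + ((m - 1 : ℕ) : ZMod N) with hn
  have hcast : n + 1 = b + (m : ZMod N) := by
    rw [hn]
    have : ((m - 1 : ℕ) : ZMod N) + 1 = (m : ZMod N) := by
      rw [show m = (m - 1) + 1 by omega]
      push_cast
      ring
    rw [add_assoc, this]
  have hstep1 : p (n + 1) - p n = S := hprev
  have hstep2 : p (n + 1 + 1) - p (n + 1) = -S := by
    rw [hcast]
    exact (h _).resolve_left hspec
  have heq : p (n + 1 + 1) = p n := by
    have := hstep1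
    have := hstep2
    linear_combination hstep1 + hstep2
  have h2 : n + 1 + 1 = n := hp heq
  have h20 : (2 : ZMod N) = 0 := by linear_combination h2
  have hdvd : N ∣ 2 := (ZMod.natCast_eq_zero_iff 2 N).mp (by exact_mod_cast h20)
  have := Nat.le_of_dvd (by norm_num) hdvd
  omega
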